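/- Let k be an integer with k > 1 and π a permutation of {1,...,k}. There exists a constant C = C(π) such that for every positive integer n, the number of n×n 0-1 matrices containing no copy of the permutation matrix A_π is at most exp(Cn). -/

import Mathlib

/-- The number of copies of the `k × k` permutation matrix `A_π` in the `n × n`
0-1 matrix `M`: pairs of strictly increasing row/column index tuples such that
`M` has a one at `(x i, y (π i))` for every `i`. -/
noncomputable def matCopies {k n : ℕ} (π : Equiv.Perm (Fin k))
    (M : Fin n → Fin n → Bool) : ℕ :=
  Nat.card {xy : (Fin k → Fin n) × (Fin k → Fin n) //
    StrictMono xy.1 ∧ StrictMono xy.2 ∧ ∀ i, M (xy.1 i) (xy.2 (π i)) = true}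

namespace MTproof
open Finset

variable {k : ℕ} {π : Equiv.Perm (Fin k)}

/-- `S` contains a copy of the permutation `π`. -/
def Contains (π : Equiv.Perm (Fin k)) (S : Finset (ℕ × ℕ)) : Prop :=
  ∃ x y : Fin k → ℕ, StrictMono x ∧ StrictMono y ∧ ∀ i, (x i, y (π i)) ∈ S

lemma Contains.mono {S T : Finset (ℕ × ℕ)} (hST : S ⊆ T) :
    Contains π S → Contains π T := by
  rintro ⟨x, y, hx, hy, h⟩; exact ⟨x, y, hx, hy, fun i => hST (h i)⟩

/-- The block-index map. -/
def blk (B : ℕ) (p : ℕ × ℕ) : ℕ × ℕ := (p.1 / B, p.2 / B)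

def fib (B : ℕ) (S : Finset (ℕ × ℕ)) (p : ℕ × ℕ) : Finset (ℕ × ℕ) :=
  S.filter (fun q => blk B q = p)

def colset (B : ℕ) (S : Finset (ℕ × ℕ)) (p : ℕ × ℕ) : Finset ℕ :=
  (fib B S p).image Prod.snd

def rowset (B : ℕ) (S : Finset (ℕ × ℕ)) (p : ℕ × ℕ) : Finset ℕ :=
  (fib B S p).image Prod.fst

lemma lt_of_div_lt_div' {B a b : ℕ} (h : a / B < b / B) : a < b :=
  Nat.lt_of_div_lt_div h

lemma contains_of_contains_image_blk {B : ℕ} {S : Finset (ℕ × ℕ)}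
    (h : Contains π (S.image (blk B))) : Contains π S := by
  obtain ⟨x, y, hx, hy, hmem⟩ := h
  choose p hpS hpeq using fun i => Finset.mem_image.1 (hmem i)
  have h1 : ∀ i, (p i).1 / B = x i := fun i => congrArg Prod.fst (hpeq i)
  have h2 : ∀ i, (p i).2 / B = y (π i) := fun i => congrArg Prod.snd (hpeq i)
  refine ⟨fun i => (p i).1, fun j => (p (π.symm j)).2, ?_, ?_, ?_⟩
  · intro i i' hii'
    refine lt_of_div_lt_div' (B := B) ?_
    rw [h1, h1]; exact hx hii'
  · intro j j' hjj'
    refine lt_of_div_lt_div' (B := B) ?_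
    have e : ∀ j, (p (π.symm j)).2 / B = y j := fun j => by
      rw [h2, Equiv.apply_symm_apply]
    rw [e, e]; exact hy hjj'
  · intro i
    simp only [Equiv.symm_apply_apply]
    exact hpS i

lemma div_eq_iff' {B a J : ℕ} (hB : 0 < B) : a / B = J ↔ B * J ≤ a ∧ a < B * (J + 1) := by
  constructor
  · rintro rfl
    refine ⟨by rw [Nat.mul_comm]; exact Nat.div_mul_le_self a B, ?_⟩
    conv_lhs => rw [← Nat.div_add_mod a B]
    rw [Nat.mul_succ]
    exact Nat.add_lt_add_left (Nat.mod_lt _ hB) _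
  · rintro ⟨h1, h2⟩
    refine Nat.div_eq_of_lt_le (by rwa [Nat.mul_comm]) ?_
    rw [Nat.mul_succ] at h2
    rw [Nat.succ_mul, Nat.mul_comm J B]
    exact h2

lemma colset_subset_Ico {B : ℕ} (hB : 0 < B) (S : Finset (ℕ × ℕ)) (p : ℕ × ℕ) :
    colset B S p ⊆ Finset.Ico (B * p.2) (B * (p.2 + 1)) := by
  intro b hb
  obtain ⟨q, hq, rfl⟩ := Finset.mem_image.1 hb
  have := (Finset.mem_filter.1 hq).2
  have h2 : q.2 / B = p.2 := congrArg Prod.snd this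
  rw [Finset.mem_Ico]
  exact (div_eq_iff' hB).1 h2

lemma rowset_subset_Ico {B : ℕ} (hB : 0 < B) (S : Finset (ℕ × ℕ)) (p : ℕ × ℕ) :
    rowset B S p ⊆ Finset.Ico (B * p.1) (B * (p.1 + 1)) := by
  intro b hb
  obtain ⟨q, hq, rfl⟩ := Finset.mem_image.1 hb
  have := (Finset.mem_filter.1 hq).2
  have h2 : q.1 / B = p.1 := congrArg Prod.fst this
  rw [Finset.mem_Ico]
  exact (div_eq_iff' hB).1 h2

lemma card_Ico_B (B J : ℕ) : (Finset.Ico (B * J) (B * (J + 1))).card = B := by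
  rw [Nat.card_Ico, Nat.mul_succ]; omega

/-- Key pigeonhole lemma: in a fixed block-column `J`, the number of "wide"
blocks (using at least `k` columns) is at most `(k-1) * B.choose k`. -/
lemma wide_bound (hk : 0 < k) {S : Finset (ℕ × ℕ)} (h : ¬ Contains π S) {B : ℕ} (hB : 0 < B)
    (J : ℕ) (W : Finset (ℕ × ℕ))
    (hW : ∀ p ∈ W, p.2 = J ∧ k ≤ (colset B S p).card) :
    W.card ≤ (k - 1) * B.choose k := by
  classical
  by_contra hcard
  push_neg at hcard
  set g : ℕ × ℕ → Finset ℕ := fun p =>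
    if hp : k ≤ (colset B S p).card then (Finset.exists_subset_card_eq (s := colset B S p) hp).choose else ∅
    with hg
  have hgsub : ∀ p, k ≤ (colset B S p).card → g p ⊆ colset B S p ∧ (g p).card = k := by
    intro p hp
    rw [hg]; simp only [dif_pos hp]
    obtain ⟨h1, h2⟩ := (Finset.exists_subset_card_eq (s := colset B S p) hp).choose_spec
    exact ⟨h1, h2⟩
  set t : Finset (Finset ℕ) := (Finset.Ico (B * J) (B * (J + 1))).powersetCard k with ht
  have hmaps : ∀ p ∈ W, g p ∈ t := by
    intro p hp
    obtain ⟨hpJ, hpk⟩ := hW p hp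
    rw [ht, Finset.mem_powersetCard]
    refine ⟨(hgsub p hpk).1.trans ?_, (hgsub p hpk).2⟩
    rw [← hpJ]
    exact colset_subset_Ico hB S p
  have htcard : t.card = B.choose k := by
    rw [ht, Finset.card_powersetCard, card_Ico_B]
  have hlt : t.card * (k - 1) < W.card := by rw [htcard, Nat.mul_comm]; exact hcard
  obtain ⟨F, hFt, hV⟩ := Finset.exists_lt_card_fiber_of_mul_lt_card_of_maps_to hmaps hlt
  set V := W.filter (fun p => g p = F) with hVdef
  have hVk : k ≤ V.card := by omega
  have hVJ : ∀ p ∈ V, p.2 = J := fun p hp => (hW p (Finset.mem_filter.1 hp).1).1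
  have hV1 : k ≤ (V.image Prod.fst).card := by
    rwa [Finset.card_image_of_injOn]
    intro p hp q hq hpq
    have := hVJ p hp
    have := hVJ q hq
    exact Prod.ext hpq (by omega)
  obtain ⟨U, hUsub, hUcard⟩ := Finset.exists_subset_card_eq hV1
  set eI := U.orderEmbOfFin hUcard with heI
  have hFcard : F.card = k := (Finset.mem_powersetCard.1 hFt).2
  set c := F.orderEmbOfFin hFcard with hc
  have hblock : ∀ i : Fin k, (eI i, J) ∈ V := by
    intro i
    have : eI i ∈ U := U.orderEmbOfFin_mem hUcard i
    obtain ⟨q, hq, hq1⟩ := Finset.mem_image.1 (hUsub this)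
    have hq2 := hVJ q hq
    have : (eI i, J) = q := Prod.ext hq1.symm hq2.symm
    rwa [this]
  have hex : ∀ i : Fin k, ∃ a, (a, c (π i)) ∈ S ∧ a / B = eI i := by
    intro i
    have hmem := hblock i
    have hWmem : (eI i, J) ∈ W := (Finset.mem_filter.1 hmem).1
    have hgF : g (eI i, J) = F := (Finset.mem_filter.1 hmem).2
    have hkcard := (hW _ hWmem).2
    have hFsub : F ⊆ colset B S (eI i, J) := hgF ▸ (hgsub _ hkcard).1
    have hcmem : c (π i) ∈ colset B S (eI i, J) :=
      hFsub (F.orderEmbOfFin_mem hFcard (π i))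
    obtain ⟨q, hq, hq2⟩ := Finset.mem_image.1 hcmem
    obtain ⟨hqS, hqblk⟩ := Finset.mem_filter.1 hq
    refine ⟨q.1, ?_, congrArg Prod.fst hqblk⟩
    have : (q.1, c (π i)) = q := Prod.ext rfl hq2.symm
    rwa [this]
  choose r hr1 hr2 using hex
  refine h ⟨r, fun j => c j, ?_, fun a b hab => c.strictMono hab, hr1⟩
  intro i i' hii'
  refine lt_of_div_lt_div' (B := B) ?_
  rw [hr2, hr2]
  exact eI.strictMono hii'

lemma contains_swap {S : Finset (ℕ × ℕ)} (h : Contains π S) :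
    Contains π⁻¹ (S.image Prod.swap) := by
  obtain ⟨x, y, hx, hy, hmem⟩ := h
  refine ⟨y, x, hy, hx, fun j => ?_⟩
  have := hmem (π⁻¹ j)
  rw [Finset.mem_image]
  refine ⟨_, this, ?_⟩
  simp

lemma image_swap_swap (S : Finset (ℕ × ℕ)) : (S.image Prod.swap).image Prod.swap = S := by
  rw [Finset.image_image]
  simp

lemma not_contains_swap {S : Finset (ℕ × ℕ)} (h : ¬ Contains π S) :
    ¬ Contains π⁻¹ (S.image Prod.swap) := by
  intro hc
  apply h
  have := contains_swap hc
  rwa [inv_inv, image_swap_swap] at this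

lemma fib_swap (B : ℕ) (S : Finset (ℕ × ℕ)) (a b : ℕ) :
    fib B (S.image Prod.swap) (a, b) = (fib B S (b, a)).image Prod.swap := by
  ext ⟨u, v⟩
  simp only [fib, blk, Finset.mem_filter, Finset.mem_image, Prod.ext_iff, Prod.swap]
  constructor
  · rintro ⟨⟨⟨c, d⟩, hcd, h1, h2⟩, h3, h4⟩
    obtain rfl : d = u := h1
    obtain rfl : c = v := h2
    exact ⟨_, ⟨hcd, h4, h3⟩, rfl, rfl⟩
  · rintro ⟨⟨c, d⟩, ⟨hcd, h3, h4⟩, h1, h2⟩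
    subst h1; subst h2
    exact ⟨⟨(c, d), hcd, rfl, rfl⟩, h4, h3⟩

lemma rowset_eq_colset_swap (B : ℕ) (S : Finset (ℕ × ℕ)) (a b : ℕ) :
    rowset B S (a, b) = colset B (S.image Prod.swap) (b, a) := by
  rw [colset, fib_swap, Finset.image_image, rowset]
  rfl

lemma tall_bound (hk : 0 < k) {S : Finset (ℕ × ℕ)} (h : ¬ Contains π S) {B : ℕ} (hB : 0 < B)
    (I : ℕ) (W : Finset (ℕ × ℕ))
    (hW : ∀ p ∈ W, p.1 = I ∧ k ≤ (rowset B S p).card) :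
    W.card ≤ (k - 1) * B.choose k := by
  have h' := not_contains_swap h
  rw [← Finset.card_image_of_injective W Prod.swap_injective]
  apply wide_bound hk h' hB I
  intro p hp
  obtain ⟨q, hq, rfl⟩ := Finset.mem_image.1 hp
  obtain ⟨h1, h2⟩ := hW q hq
  refine ⟨h1, ?_⟩
  rcases q with ⟨a, b⟩
  rwa [Prod.swap, ← rowset_eq_colset_swap]
-- appended to d.lean for testing
lemma fib_subset_product {B : ℕ} (S : Finset (ℕ × ℕ)) (p : ℕ × ℕ) :
    fib B S p ⊆ rowset B S p ×ˢ colset B S p := by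
  intro q hq
  rw [Finset.mem_product]
  exact ⟨Finset.mem_image_of_mem _ hq, Finset.mem_image_of_mem _ hq⟩

lemma fib_card_le {B : ℕ} (S : Finset (ℕ × ℕ)) (p : ℕ × ℕ) :
    (fib B S p).card ≤ (rowset B S p).card * (colset B S p).card := by
  calc (fib B S p).card ≤ (rowset B S p ×ˢ colset B S p).card :=
        Finset.card_le_card (fib_subset_product S p)
    _ = _ := Finset.card_product _ _

lemma mt_pow (hk : 1 < k) (π : Equiv.Perm (Fin k)) (m : ℕ) :
    ∀ S : Finset (ℕ × ℕ), S ⊆ Finset.range ((k^2)^m) ×ˢ Finset.range ((k^2)^m) →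
      ¬ Contains π S →
      S.card ≤ (2 * (k^2)^2 * ((k - 1) * (k^2).choose k) + 1) * (k^2)^m := by
  classical
  set B := k ^ 2 with hBdef
  have hB : 0 < B := by positivity
  set C1 := (k - 1) * B.choose k with hC1
  set c := 2 * B ^ 2 * C1 + 1 with hcdef
  induction m with
  | zero =>
    intro S hS _
    have : S.card ≤ 1 := by
      calc S.card ≤ (Finset.range (B^0) ×ˢ Finset.range (B^0)).card := Finset.card_le_card hS
        _ = 1 := by simp
    calc S.card ≤ 1 := this
      _ ≤ c * B ^ 0 := by simp [hcdef]
  | succ m ih =>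
    intro S hS hav
    set T := S.image (blk B) with hT
    have hTsub : T ⊆ Finset.range (B^m) ×ˢ Finset.range (B^m) := by
      intro p hp
      obtain ⟨q, hq, rfl⟩ := Finset.mem_image.1 hp
      have hq' := Finset.mem_product.1 (hS hq)
      simp only [Finset.mem_range] at hq'
      rw [Finset.mem_product, Finset.mem_range, Finset.mem_range]
      constructor
      · exact (Nat.div_lt_iff_lt_mul hB).2 (by rw [← pow_succ]; exact hq'.1)
      · exact (Nat.div_lt_iff_lt_mul hB).2 (by rw [← pow_succ]; exact hq'.2)
    have hTav : ¬ Contains π T := fun hc => hav (contains_of_contains_image_blk hc)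
    have hTcard : T.card ≤ c * B ^ m := ih T hTsub hTav
    -- decompose the count of S blockwise
    have hsum : S.card = ∑ p ∈ T, (fib B S p).card := by
      apply Finset.card_eq_sum_card_fiberwise
      intro q hq
      exact Finset.mem_image_of_mem _ hq
    set Wide := T.filter (fun p => k ≤ (colset B S p).card) with hWide
    set Tall := T.filter (fun p => k ≤ (rowset B S p).card) with hTall
    set WT := Wide ∪ Tall with hWT
    have hWTsub : WT ⊆ T := by
      rw [hWT]
      exact Finset.union_subset (Finset.filter_subset _ _) (Finset.filter_subset _ _)
    -- column/row set cardinality bounds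
    have hcolB : ∀ p, (colset B S p).card ≤ B := fun p => by
      calc (colset B S p).card ≤ _ := Finset.card_le_card (colset_subset_Ico hB S p)
        _ = B := card_Ico_B _ _
    have hrowB : ∀ p, (rowset B S p).card ≤ B := fun p => by
      calc (rowset B S p).card ≤ _ := Finset.card_le_card (rowset_subset_Ico hB S p)
        _ = B := card_Ico_B _ _
    have hfibB : ∀ p, (fib B S p).card ≤ B * B := fun p =>
      (fib_card_le S p).trans (Nat.mul_le_mul (hrowB p) (hcolB p))
    have hfibsmall : ∀ p ∈ T \ WT, (fib B S p).card ≤ (k-1) * (k-1) := by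
      intro p hp
      rw [Finset.mem_sdiff] at hp
      obtain ⟨hpT, hpWT⟩ := hp
      rw [hWT, Finset.mem_union, not_or, hWide, hTall] at hpWT
      have h1 : (colset B S p).card ≤ k - 1 := by
        have h1' : (colset B S p).card < k :=
          Nat.lt_of_not_le (fun hcon => hpWT.1 (Finset.mem_filter.2 ⟨hpT, hcon⟩))
        omega
      have h2 : (rowset B S p).card ≤ k - 1 := by
        have h2' : (rowset B S p).card < k :=
          Nat.lt_of_not_le (fun hcon => hpWT.2 (Finset.mem_filter.2 ⟨hpT, hcon⟩))
        omega
      exact (fib_card_le S p).trans (Nat.mul_le_mul h2 h1)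
    -- bound the number of wide blocks
    have hWideCard : Wide.card ≤ C1 * B ^ m := by
      have hmaps : ∀ p ∈ Wide, p.2 ∈ Finset.range (B ^ m) := by
        intro p hp
        exact (Finset.mem_product.1 (hTsub (Finset.filter_subset _ _ hp))).2
      rw [Finset.card_eq_sum_card_fiberwise hmaps]
      calc ∑ J ∈ Finset.range (B ^ m), (Wide.filter (fun p => p.2 = J)).card
          ≤ ∑ _J ∈ Finset.range (B ^ m), C1 := by
            apply Finset.sum_le_sum
            intro J _
            apply wide_bound (by omega) hav hB J
            intro p hp
            rw [Finset.mem_filter] at hp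
            exact ⟨hp.2, (Finset.mem_filter.1 hp.1).2⟩
        _ = C1 * B ^ m := by rw [Finset.sum_const, Finset.card_range, smul_eq_mul, Nat.mul_comm]
    have hTallCard : Tall.card ≤ C1 * B ^ m := by
      have hmaps : ∀ p ∈ Tall, p.1 ∈ Finset.range (B ^ m) := by
        intro p hp
        exact (Finset.mem_product.1 (hTsub (Finset.filter_subset _ _ hp))).1
      rw [Finset.card_eq_sum_card_fiberwise hmaps]
      calc ∑ I ∈ Finset.range (B ^ m), (Tall.filter (fun p => p.1 = I)).card
          ≤ ∑ _I ∈ Finset.range (B ^ m), C1 := by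
            apply Finset.sum_le_sum
            intro I _
            apply tall_bound (by omega) hav hB I
            intro p hp
            rw [Finset.mem_filter] at hp
            exact ⟨hp.2, (Finset.mem_filter.1 hp.1).2⟩
        _ = C1 * B ^ m := by rw [Finset.sum_const, Finset.card_range, smul_eq_mul, Nat.mul_comm]
    have hWTCard : WT.card ≤ 2 * C1 * B ^ m := by
      calc WT.card ≤ Wide.card + Tall.card := Finset.card_union_le _ _
        _ ≤ C1 * B ^ m + C1 * B ^ m := Nat.add_le_add hWideCard hTallCard
        _ = 2 * C1 * B ^ m := by ring
    -- put it together
    have hsplit : S.card ≤ (T \ WT).card * ((k-1)*(k-1)) + WT.card * (B * B) := by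
      rw [hsum, ← Finset.sum_sdiff hWTsub]
      apply Nat.add_le_add
      · calc ∑ p ∈ T \ WT, (fib B S p).card ≤ ∑ _p ∈ T \ WT, (k-1)*(k-1) :=
              Finset.sum_le_sum hfibsmall
          _ = _ := by rw [Finset.sum_const, smul_eq_mul]
      · calc ∑ p ∈ WT, (fib B S p).card ≤ ∑ _p ∈ WT, B * B :=
              Finset.sum_le_sum (fun p _ => hfibB p)
          _ = _ := by rw [Finset.sum_const, smul_eq_mul]
    have hTWTcard : (T \ WT).card ≤ c * B ^ m :=
      (Finset.card_le_card Finset.sdiff_subset).trans hTcard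
    have hfinal : S.card ≤ c * B ^ m * ((k-1)*(k-1)) + 2 * C1 * B ^ m * (B*B) := by
      calc S.card ≤ (T \ WT).card * ((k-1)*(k-1)) + WT.card * (B * B) := hsplit
        _ ≤ c * B ^ m * ((k-1)*(k-1)) + 2 * C1 * B ^ m * (B*B) :=
            Nat.add_le_add (Nat.mul_le_mul hTWTcard (le_refl _))
              (Nat.mul_le_mul hWTCard (le_refl _))
    obtain ⟨a, ha⟩ : ∃ a, k = a + 2 := ⟨k - 2, by omega⟩
    have hkey : B = (k-1)*(k-1) + (2*k - 1) := by
      rw [hBdef, ha]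
      have e1 : a + 2 - 1 = a + 1 := by omega
      have e2 : 2*(a+2) - 1 = 2*a + 3 := by omega
      rw [e1, e2]
      ring
    have hcge : 2 * B ^ 2 * C1 + 1 ≤ c := le_of_eq hcdef.symm
    have e1 : 2 * C1 * B ^ m * (B*B) = 2 * B ^ 2 * C1 * B ^ m := by ring
    have e2 : 2 * B ^ 2 * C1 * B ^ m ≤ c * B ^ m :=
      Nat.mul_le_mul (by omega) (le_refl _)
    have e3 : c * B ^ m ≤ c * B ^ m * (2*k - 1) :=
      Nat.le_mul_of_pos_right _ (by omega)
    calc S.card ≤ c * B ^ m * ((k-1)*(k-1)) + 2 * C1 * B ^ m * (B*B) := hfinal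
      _ ≤ c * B ^ m * ((k-1)*(k-1)) + c * B ^ m * (2*k - 1) :=
          Nat.add_le_add_left ((e1 ▸ e2).trans e3) _
      _ = c * B ^ (m+1) := by rw [pow_succ, hkey]; ring

/-- Füredi–Hajnal / Marcus–Tardos: a linear bound on the number of points of an
avoider. -/
lemma mt (hk : 1 < k) (π : Equiv.Perm (Fin k)) :
    ∃ c : ℕ, ∀ n : ℕ, ∀ S : Finset (ℕ × ℕ),
      S ⊆ Finset.range n ×ˢ Finset.range n → ¬ Contains π S → S.card ≤ c * n := by
  classical
  set B := k ^ 2 with hBdef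
  have hB1 : 1 < B := Nat.one_lt_pow (by omega) hk
  set c0 := 2 * B ^ 2 * ((k - 1) * B.choose k) + 1 with hc0
  refine ⟨c0 * B, ?_⟩
  intro n S hS hav
  rcases Nat.eq_zero_or_pos n with rfl | hn
  · have : S = ∅ := Finset.subset_empty.1 (by simpa using hS)
    simp [this]
  · set m := Nat.log B n + 1 with hm
    have h1 : n ≤ B ^ m := le_of_lt (Nat.lt_pow_succ_log_self hB1 n)
    have hS' : S ⊆ Finset.range (B ^ m) ×ˢ Finset.range (B ^ m) :=
      hS.trans (Finset.product_subset_product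
        (Finset.range_subset_range.2 h1) (Finset.range_subset_range.2 h1))
    have h2 := mt_pow hk π m S hS' hav
    have h3 : B ^ m ≤ B * n := by
      rw [hm, pow_succ]
      calc B ^ Nat.log B n * B ≤ n * B :=
            Nat.mul_le_mul (Nat.pow_log_le_self B (by omega)) (le_refl _)
        _ = B * n := Nat.mul_comm _ _
    calc S.card ≤ c0 * B ^ m := h2
      _ ≤ c0 * (B * n) := Nat.mul_le_mul (le_refl _) h3
      _ = c0 * B * n := (Nat.mul_assoc _ _ _).symm

open scoped Classical in
/-- The finset of `π`-avoiding subsets of the `n × n` grid. -/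
noncomputable def av (π : Equiv.Perm (Fin k)) (n : ℕ) : Finset (Finset (ℕ × ℕ)) :=
  (Finset.range n ×ˢ Finset.range n).powerset.filter (fun S => ¬ Contains π S)

lemma mem_av {π : Equiv.Perm (Fin k)} {n : ℕ} {S : Finset (ℕ × ℕ)} :
    S ∈ av π n ↔ S ⊆ Finset.range n ×ˢ Finset.range n ∧ ¬ Contains π S := by
  classical
  simp [av, Finset.mem_filter, Finset.mem_powerset]

lemma av_mono {π : Equiv.Perm (Fin k)} {n m : ℕ} (h : n ≤ m) : av π n ⊆ av π m := by
  intro S hS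
  rw [mem_av] at hS ⊢
  refine ⟨hS.1.trans (Finset.product_subset_product
    (Finset.range_subset_range.2 h) (Finset.range_subset_range.2 h)), hS.2⟩

lemma card_av_one (π : Equiv.Perm (Fin k)) : (av π 1).card ≤ 2 := by
  classical
  calc (av π 1).card ≤ (Finset.range 1 ×ˢ Finset.range 1).powerset.card := by
        apply Finset.card_le_card
        intro S hS
        exact Finset.mem_powerset.2 (mem_av.1 hS).1
    _ = 2 := by rw [Finset.card_powerset]; simp

/-- One Klazar halving step: fibers of the contraction map have size `≤ 16 ^ |T|`. -/
lemma fiber_card_le {π : Equiv.Perm (Fin k)} {n : ℕ} (T : Finset (ℕ × ℕ)) :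
    ((av π (2 * n)).filter (fun S => S.image (blk 2) = T)).card ≤ 16 ^ T.card := by
  classical
  have hinj : Set.InjOn (fun (S : Finset (ℕ × ℕ)) => fun (p : ℕ × ℕ) (_ : p ∈ T) => fib 2 S p)
      ((av π (2 * n)).filter (fun S => S.image (blk 2) = T)) := by
    intro S hS S' hS' heq
    have hT : S.image (blk 2) = T := (Finset.mem_filter.1 hS).2
    have hT' : S'.image (blk 2) = T := (Finset.mem_filter.1 hS').2
    ext q
    constructor
    · intro hq
      have hqT : blk 2 q ∈ T := hT ▸ Finset.mem_image_of_mem _ hq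
      have := congrFun (congrFun heq (blk 2 q)) hqT
      dsimp only at this
      have hq' : q ∈ fib 2 S (blk 2 q) := Finset.mem_filter.2 ⟨hq, rfl⟩
      rw [this] at hq'
      exact (Finset.mem_filter.1 hq').1
    · intro hq
      have hqT : blk 2 q ∈ T := hT' ▸ Finset.mem_image_of_mem _ hq
      have := congrFun (congrFun heq (blk 2 q)) hqT
      dsimp only at this
      have hq' : q ∈ fib 2 S' (blk 2 q) := Finset.mem_filter.2 ⟨hq, rfl⟩
      rw [← this] at hq'
      exact (Finset.mem_filter.1 hq').1
  have hmaps : ∀ S ∈ (av π (2 * n)).filter (fun S => S.image (blk 2) = T),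
      (fun (p : ℕ × ℕ) (_ : p ∈ T) => fib 2 S p) ∈
        T.pi (fun p => (Finset.Ico (2 * p.1) (2 * (p.1 + 1)) ×ˢ
          Finset.Ico (2 * p.2) (2 * (p.2 + 1))).powerset) := by
    intro S _
    rw [Finset.mem_pi]
    intro p _
    rw [Finset.mem_powerset]
    intro q hq
    have hblk : blk 2 q = p := (Finset.mem_filter.1 hq).2
    have h1 : q.1 / 2 = p.1 := congrArg Prod.fst hblk
    have h2 : q.2 / 2 = p.2 := congrArg Prod.snd hblk
    rw [Finset.mem_product, Finset.mem_Ico, Finset.mem_Ico]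
    exact ⟨(div_eq_iff' (by omega)).1 h1, (div_eq_iff' (by omega)).1 h2⟩
  calc ((av π (2 * n)).filter (fun S => S.image (blk 2) = T)).card
      ≤ (T.pi (fun p => (Finset.Ico (2 * p.1) (2 * (p.1 + 1)) ×ˢ
          Finset.Ico (2 * p.2) (2 * (p.2 + 1))).powerset)).card :=
        Finset.card_le_card_of_injOn _ hmaps hinj
    _ = ∏ p ∈ T, ((Finset.Ico (2 * p.1) (2 * (p.1 + 1)) ×ˢ
          Finset.Ico (2 * p.2) (2 * (p.2 + 1))).powerset).card := Finset.card_pi _ _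
    _ = 16 ^ T.card := by
        have e : ∀ p : ℕ × ℕ, ((Finset.Ico (2 * p.1) (2 * (p.1 + 1)) ×ˢ
            Finset.Ico (2 * p.2) (2 * (p.2 + 1))).powerset).card = 16 := by
          intro p
          rw [Finset.card_powerset, Finset.card_product, Nat.card_Ico, Nat.card_Ico]
          have e1 : 2 * (p.1 + 1) - 2 * p.1 = 2 := by omega
          have e2 : 2 * (p.2 + 1) - 2 * p.2 = 2 := by omega
          rw [e1, e2]; norm_num
        rw [Finset.prod_congr rfl (fun p _ => e p), Finset.prod_const]

/-- The Klazar halving step. -/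
lemma klazar_step {π : Equiv.Perm (Fin k)} {n t : ℕ}
    (ht : ∀ S ∈ av π n, S.card ≤ t) :
    (av π (2 * n)).card ≤ 16 ^ t * (av π n).card := by
  classical
  have hmaps : ∀ S ∈ av π (2 * n), S.image (blk 2) ∈ av π n := by
    intro S hS
    rw [mem_av] at hS ⊢
    obtain ⟨hsub, hav⟩ := hS
    constructor
    · intro p hp
      obtain ⟨q, hq, rfl⟩ := Finset.mem_image.1 hp
      have hq' := Finset.mem_product.1 (hsub hq)
      simp only [Finset.mem_range] at hq'
      rw [Finset.mem_product, Finset.mem_range, Finset.mem_range]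
      constructor
      · exact (Nat.div_lt_iff_lt_mul (by omega)).2 (by omega)
      · exact (Nat.div_lt_iff_lt_mul (by omega)).2 (by omega)
    · exact fun hc => hav (contains_of_contains_image_blk hc)
  rw [Finset.card_eq_sum_card_fiberwise hmaps]
  calc ∑ T ∈ av π n, ((av π (2 * n)).filter (fun S => S.image (blk 2) = T)).card
      ≤ ∑ T ∈ av π n, 16 ^ t := by
        apply Finset.sum_le_sum
        intro T hT
        calc ((av π (2 * n)).filter (fun S => S.image (blk 2) = T)).card
            ≤ 16 ^ T.card := fiber_card_le T
          _ ≤ 16 ^ t := Nat.pow_le_pow_right (by omega) (ht T hT)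
    _ = 16 ^ t * (av π n).card := by rw [Finset.sum_const, smul_eq_mul, Nat.mul_comm]

lemma av_pow2 (hk : 1 < k) (π : Equiv.Perm (Fin k)) :
    ∃ c : ℕ, ∀ j : ℕ, (av π (2 ^ j)).card ≤ 2 * 16 ^ (c * 2 ^ j) := by
  obtain ⟨c, hc⟩ := mt hk π
  refine ⟨c, fun j => ?_⟩
  induction j with
  | zero =>
    calc (av π (2 ^ 0)).card ≤ 2 := by rw [pow_zero]; exact card_av_one π
      _ ≤ 2 * 16 ^ (c * 2 ^ 0) := Nat.le_mul_of_pos_right _ (by positivity)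
  | succ j ih =>
    have hstep : (av π (2 * 2 ^ j)).card ≤ 16 ^ (c * 2 ^ j) * (av π (2 ^ j)).card := by
      apply klazar_step
      intro S hS
      rw [mem_av] at hS
      exact hc (2 ^ j) S hS.1 hS.2
    calc (av π (2 ^ (j + 1))).card = (av π (2 * 2 ^ j)).card := by
          rw [pow_succ, Nat.mul_comm]
      _ ≤ 16 ^ (c * 2 ^ j) * (av π (2 ^ j)).card := hstep
      _ ≤ 16 ^ (c * 2 ^ j) * (2 * 16 ^ (c * 2 ^ j)) := Nat.mul_le_mul (le_refl _) ih
      _ = 2 * 16 ^ (c * 2 ^ j + c * 2 ^ j) := by rw [pow_add]; ring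
      _ = 2 * 16 ^ (c * 2 ^ (j + 1)) := by
          congr 2
          rw [pow_succ]
          ring

lemma av_bound (hk : 1 < k) (π : Equiv.Perm (Fin k)) :
    ∃ c : ℕ, ∀ n : ℕ, 0 < n → (av π n).card ≤ 2 * 16 ^ (2 * c * n) := by
  obtain ⟨c, hc⟩ := av_pow2 hk π
  refine ⟨c, fun n hn => ?_⟩
  set j := Nat.log 2 n + 1 with hj
  have h1 : n ≤ 2 ^ j := le_of_lt (Nat.lt_pow_succ_log_self (by omega) n)
  have h2 : 2 ^ j ≤ 2 * n := by
    rw [hj, pow_succ, Nat.mul_comm]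
    exact Nat.mul_le_mul (le_refl 2) (Nat.pow_log_le_self 2 (by omega))
  calc (av π n).card ≤ (av π (2 ^ j)).card := Finset.card_le_card (av_mono h1)
    _ ≤ 2 * 16 ^ (c * 2 ^ j) := hc j
    _ ≤ 2 * 16 ^ (2 * c * n) := by
        apply Nat.mul_le_mul (le_refl 2)
        apply Nat.pow_le_pow_right (by omega)
        calc c * 2 ^ j ≤ c * (2 * n) := Nat.mul_le_mul (le_refl c) h2
          _ = 2 * c * n := by ring

/-- The finset of positions of ones of a 0-1 matrix. -/
def mset {n : ℕ} (M : Fin n → Fin n → Bool) : Finset (ℕ × ℕ) :=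
  Finset.image (fun p : Fin n × Fin n => ((p.1.1, p.2.1) : ℕ × ℕ))
    (Finset.univ.filter (fun p : Fin n × Fin n => M p.1 p.2))

lemma mem_mset {n : ℕ} {M : Fin n → Fin n → Bool} (a b : Fin n) :
    ((a.1, b.1) ∈ mset M) ↔ M a b = true := by
  constructor
  · intro h
    obtain ⟨q, hq, hq2⟩ := Finset.mem_image.1 h
    have h1 : q.1 = a := Fin.val_injective (congrArg Prod.fst hq2)
    have h2 : q.2 = b := Fin.val_injective (congrArg Prod.snd hq2)
    have := (Finset.mem_filter.1 hq).2
    rwa [h1, h2] at this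
  · intro h
    exact Finset.mem_image_of_mem (fun p : Fin n × Fin n => ((p.1.1, p.2.1) : ℕ × ℕ))
      (Finset.mem_filter.2 ⟨Finset.mem_univ (a, b), h⟩)

lemma mset_subset {n : ℕ} (M : Fin n → Fin n → Bool) :
    mset M ⊆ Finset.range n ×ˢ Finset.range n := by
  intro p hp
  obtain ⟨q, _, rfl⟩ := Finset.mem_image.1 hp
  rw [Finset.mem_product, Finset.mem_range, Finset.mem_range]
  exact ⟨q.1.2, q.2.2⟩

lemma matCopies_eq_zero_iff {n : ℕ} (π : Equiv.Perm (Fin k)) (M : Fin n → Fin n → Bool) :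
    matCopies π M = 0 ↔ ¬ Contains π (mset M) := by
  rw [matCopies, Nat.card_eq_zero]
  have hfin : ¬ Infinite {xy : (Fin k → Fin n) × (Fin k → Fin n) //
      StrictMono xy.1 ∧ StrictMono xy.2 ∧ ∀ i, M (xy.1 i) (xy.2 (π i)) = true} :=
    not_infinite_iff_finite.2 inferInstance
  constructor
  · rintro (hempty | hinf)
    · intro hcon
      obtain ⟨x, y, hx, hy, hmem⟩ := hcon
      have hxlt : ∀ i, x i < n := by
        intro i
        have := Finset.mem_product.1 (mset_subset M (hmem i))
        simpa using this.1
      have hylt : ∀ j, y j < n := by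
        intro j
        have := Finset.mem_product.1 (mset_subset M (hmem (π.symm j)))
        have h2 := this.2
        rwa [Equiv.apply_symm_apply, Finset.mem_range] at h2
      refine hempty.false ⟨(fun i => ⟨x i, hxlt i⟩, fun j => ⟨y j, hylt j⟩), ?_, ?_, ?_⟩
      · intro i i' h
        exact Fin.mk_lt_mk.2 (hx h)
      · intro j j' h
        exact Fin.mk_lt_mk.2 (hy h)
      · intro i
        exact (mem_mset _ _).1 (hmem i)
    · exact absurd hinf hfin
  · intro hnc
    left
    rw [isEmpty_iff]
    rintro ⟨⟨x, y⟩, hx, hy, hmem⟩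
    apply hnc
    refine ⟨fun i => (x i).1, fun j => (y j).1, ?_, ?_, ?_⟩
    · intro i i' h
      exact hx h
    · intro j j' h
      exact hy h
    · intro i
      exact (mem_mset _ _).2 (hmem i)

lemma mset_injective {n : ℕ} : Function.Injective (mset (n := n)) := by
  intro M M' h
  funext a b
  have h1 := (mem_mset (M := M) a b).symm.trans (h ▸ mem_mset (M := M') a b)
  rcases hMab : M a b with _ | _ <;> rcases hM'ab : M' a b with _ | _ <;>
    simp [hMab, hM'ab] at h1 ⊢

lemma count_le {n : ℕ} (π : Equiv.Perm (Fin k)) :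
    Nat.card {M : Fin n → Fin n → Bool // matCopies π M = 0} ≤ (av π n).card := by
  classical
  have hf : Function.Injective
      (fun M : {M : Fin n → Fin n → Bool // matCopies π M = 0} =>
        (⟨mset M.1, mem_av.2 ⟨mset_subset M.1, (matCopies_eq_zero_iff π M.1).1 M.2⟩⟩ :
          {S // S ∈ av π n})) := by
    intro M M' h
    exact Subtype.ext (mset_injective (congrArg Subtype.val h))
  calc Nat.card {M : Fin n → Fin n → Bool // matCopies π M = 0}
      ≤ Nat.card {S // S ∈ av π n} := Nat.card_le_card_of_injective _ hf
    _ = (av π n).card := Nat.card_eq_finsetCard _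

end MTproof

/-- The number of `n × n` 0-1 matrices avoiding the permutation matrix `A_π`
(containing no copy of it) is at most `exp(Cn)`. -/
theorem count_avoiding_matrices (k : ℕ) (hk : 1 < k) (π : Equiv.Perm (Fin k)) :
    ∃ C : ℝ, ∀ n : ℕ, 0 < n →
      (Nat.card {M : Fin n → Fin n → Bool // matCopies π M = 0} : ℝ) ≤
        Real.exp (C * n) := by
  obtain ⟨c, hc⟩ := MTproof.av_bound hk π
  refine ⟨Real.log 2 + (2 * c) * Real.log 16, fun n hn => ?_⟩
  have h1 : Nat.card {M : Fin n → Fin n → Bool // matCopies π M = 0} ≤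
      2 * 16 ^ (2 * c * n) := le_trans (MTproof.count_le π) (hc n hn)
  have e2 : (2:ℝ) ^ n = Real.exp (n * Real.log 2) := by
    rw [Real.exp_nat_mul, Real.exp_log (by norm_num : (0:ℝ) < 2)]
  have e16 : (16:ℝ) ^ (2 * c * n) = Real.exp ((2 * c * n : ℕ) * Real.log 16) := by
    rw [Real.exp_nat_mul, Real.exp_log (by norm_num : (0:ℝ) < 16)]
  calc (Nat.card {M : Fin n → Fin n → Bool // matCopies π M = 0} : ℝ)
      ≤ ((2 * 16 ^ (2 * c * n) : ℕ) : ℝ) := by exact_mod_cast h1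
    _ = 2 * (16:ℝ) ^ (2 * c * n) := by push_cast; ring
    _ ≤ 2 ^ n * (16:ℝ) ^ (2 * c * n) := by
        apply mul_le_mul_of_nonneg_right ?_ (by positivity)
        exact le_self_pow₀ (by norm_num) (by omega)
    _ = Real.exp ((Real.log 2 + (2 * c) * Real.log 16) * n) := by
        rw [e2, e16, ← Real.exp_add]
        congr 1
        push_cast
        ring
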